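/- Let H be a GH(g,λ) over an abelian group with rows h₁,…,h_{gλ}, and define the block matrix M with (i,j)-block D_{ij} := φ(h_j)ᵀ φ(h_i), where φ(h_i) denotes the gλ×g²λ block row (φ(h_{i1}),…,φ(h_{i,gλ})) interpreted appropriately as g²λ×g²λ products. Then M Mᵀ = Mᵀ M = g²λ²·I_{g³λ²} + gλ²·(J_{g³λ²} − I_{g²λ²} ⊗ J_g); that is, M is the incidence matrix of a symmetric group divisible design with parameters (g³λ², g²λ², g²λ², g, 0, gλ²). -/

import Mathlib

open Matrix

set_option linter.unusedSectionVars false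
set_option maxHeartbeats 1000000
noncomputable section

section Aux
variable {G : Type*} [AddCommGroup G] [Fintype G] [DecidableEq G]
variable {g lam : ℕ} {φ : G → Matrix (Fin g) (Fin g) ℝ}

lemma phi_sq (h01 : ∀ x i j, φ x i j = 0 ∨ φ x i j = 1) (x : G) (i j : Fin g) :
    φ x i j * φ x i j = φ x i j := by
  rcases h01 x i j with h | h <;> rw [h] <;> ring

lemma phi_add (hmul : ∀ x y, φ (x + y) = φ x * φ y) (x y : G) (s t : Fin g) :
    φ (x + y) s t = ∑ w, φ x s w * φ y w t := by
  rw [hmul, Matrix.mul_apply]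

lemma phi_mul_tr (hmul : ∀ x y, φ (x + y) = φ x * φ y) (htr : ∀ x, (φ x)ᵀ = φ (-x))
    (x y : G) (s s' : Fin g) :
    ∑ t, φ x s t * φ y s' t = φ (x - y) s s' := by
  have h : φ (x - y) = φ x * (φ y)ᵀ := by rw [htr, sub_eq_add_neg, hmul]
  rw [h, Matrix.mul_apply]
  simp [transpose_apply]

lemma phi_tr_mul (hmul : ∀ x y, φ (x + y) = φ x * φ y) (htr : ∀ x, (φ x)ᵀ = φ (-x))
    (x y : G) (s s' : Fin g) :
    ∑ t, φ x t s * φ y t s' = φ (y - x) s s' := by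
  have h : φ (y - x) = (φ x)ᵀ * φ y := by
    rw [htr, sub_eq_add_neg, add_comm, hmul]
  rw [h, Matrix.mul_apply]
  simp [transpose_apply]

lemma phi_row_sum (h01 : ∀ x i j, φ x i j = 0 ∨ φ x i j = 1)
    (hmul : ∀ x y, φ (x + y) = φ x * φ y) (htr : ∀ x, (φ x)ᵀ = φ (-x))
    (hzero : φ 0 = 1) (x : G) (s : Fin g) :
    ∑ t, φ x s t = 1 := by
  have h := phi_mul_tr hmul htr x x s s
  rw [sub_self, hzero] at h
  simp only [phi_sq h01] at h
  simpa using h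

lemma phi_col_sum (h01 : ∀ x i j, φ x i j = 0 ∨ φ x i j = 1)
    (hmul : ∀ x y, φ (x + y) = φ x * φ y) (htr : ∀ x, (φ x)ᵀ = φ (-x))
    (hzero : φ 0 = 1) (x : G) (t : Fin g) :
    ∑ s, φ x s t = 1 := by
  have h := phi_row_sum h01 hmul htr hzero (-x) t
  have e : ∀ s, φ x s t = φ (-x) t s := by
    intro s; rw [← htr]; rfl
  simp only [e]; exact h

lemma phi_G_sum' (hsum : ∑ x : G, φ x = Matrix.of fun _ _ => (1 : ℝ)) (s t : Fin g) :
    ∑ x : G, φ x s t = 1 := by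
  have h := congrFun (congrFun hsum s) t
  rw [Matrix.sum_apply] at h
  simpa [Finset.sum_apply'] using h

lemma rowGH (H : Fin (g * lam) → Fin (g * lam) → G)
    (hGH : ∀ i k, i ≠ k → ∀ x : G,
      (Finset.univ.filter fun j => H i j - H k j = x).card = lam)
    (hsum : ∑ x : G, φ x = Matrix.of fun _ _ => (1 : ℝ))
    {i i' : Fin (g * lam)} (hii : i ≠ i') (s s' : Fin g) :
    ∑ a, φ (H i a - H i' a) s s' = (lam : ℝ) := by
  have h := Finset.sum_fiberwise' (Finset.univ)
    (fun a => H i a - H i' a) (fun x => φ x s s')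
  rw [← h]
  have e : ∀ x : G, ∑ a ∈ Finset.univ.filter (fun a => H i a - H i' a = x),
      φ x s s' = (lam : ℝ) * φ x s s' := by
    intro x
    rw [Finset.sum_const, hGH i i' hii x, nsmul_eq_mul]
  rw [Finset.sum_congr rfl fun x _ => e x, ← Finset.mul_sum,
    phi_G_sum' hsum, mul_one]

lemma colGH (h01 : ∀ x i j, φ x i j = 0 ∨ φ x i j = 1)
    (hmul : ∀ x y, φ (x + y) = φ x * φ y) (htr : ∀ x, (φ x)ᵀ = φ (-x))
    (hzero : φ 0 = 1)
    (hsum : ∑ x : G, φ x = Matrix.of fun _ _ => (1 : ℝ))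
    (H : Fin (g * lam) → Fin (g * lam) → G)
    (hGH : ∀ i k, i ≠ k → ∀ x : G,
      (Finset.univ.filter fun j => H i j - H k j = x).card = lam)
    (a a' : Fin (g * lam)) (s s' : Fin g) :
    ∑ j, φ (H j a' - H j a) s s' =
      if a = a' then (if s = s' then (g : ℝ) * lam else 0) else (lam : ℝ) := by
  classical
  set Φ : Matrix (Fin (g * lam) × Fin g) (Fin (g * lam) × Fin g) ℝ :=
    Matrix.of fun p q => φ (H p.1 q.1) p.2 q.2 with hΦdef
  set Jm : Matrix (Fin (g * lam) × Fin g) (Fin (g * lam) × Fin g) ℝ :=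
    Matrix.of fun _ _ => 1 with hJdef
  set Bm : Matrix (Fin (g * lam) × Fin g) (Fin (g * lam) × Fin g) ℝ :=
    Matrix.of fun p q => if p.1 = q.1 then (1 : ℝ) else 0 with hBdef
  set T : Matrix (Fin (g * lam) × Fin g) (Fin (g * lam) × Fin g) ℝ :=
    ((g : ℝ) * lam) • 1 + (lam : ℝ) • Jm - (lam : ℝ) • Bm with hTdef
  -- basic symmetry
  have hJt : Jmᵀ = Jm := by ext p q; simp [hJdef]
  have hBt : Bmᵀ = Bm := by ext p q; simp [hBdef, eq_comm]
  have hTt : Tᵀ = T := by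
    rw [hTdef, transpose_sub, transpose_add, transpose_smul, transpose_smul,
      transpose_smul, transpose_one, hJt, hBt]
  -- product identities
  have h1 : Φ * Φᵀ = T := by
    ext ⟨i, u⟩ ⟨i', u'⟩
    rw [Matrix.mul_apply]
    simp only [Fintype.sum_prod_type, hΦdef, Matrix.of_apply, transpose_apply]
    rw [Finset.sum_congr rfl fun c _ => phi_mul_tr hmul htr (H i c) (H i' c) u u']
    by_cases hi : i = i'
    · subst hi
      simp only [sub_self, hzero, Matrix.one_apply, hTdef, hJdef, hBdef,
        Matrix.sub_apply, Matrix.add_apply, Matrix.smul_apply, Matrix.of_apply,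
        Prod.mk.injEq, true_and, if_true, smul_eq_mul]
      rw [Finset.sum_const]
      simp only [Finset.card_univ, Fintype.card_fin, nsmul_eq_mul]
      by_cases hu : u = u' <;> simp [hu] <;> push_cast <;> ring
    · rw [rowGH H hGH hsum hi u u']
      simp only [hTdef, hJdef, hBdef, Matrix.sub_apply, Matrix.add_apply,
        Matrix.smul_apply, Matrix.of_apply, Matrix.one_apply, Prod.mk.injEq,
        smul_eq_mul]
      simp [hi]
  have h2 : Φ * Jm = ((g : ℝ) * lam) • Jm := by
    ext ⟨i, u⟩ ⟨i', u'⟩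
    rw [Matrix.mul_apply]
    simp only [Fintype.sum_prod_type, hΦdef, hJdef, Matrix.of_apply, mul_one,
      Matrix.smul_apply, smul_eq_mul]
    rw [Finset.sum_congr rfl fun c _ => phi_row_sum h01 hmul htr hzero (H i c) u]
    simp
  have h3 : Jm * Φ = ((g : ℝ) * lam) • Jm := by
    ext ⟨i, u⟩ ⟨i', u'⟩
    rw [Matrix.mul_apply]
    simp only [Fintype.sum_prod_type, hΦdef, hJdef, Matrix.of_apply, one_mul,
      Matrix.smul_apply, smul_eq_mul]
    rw [Finset.sum_congr rfl fun j _ =>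
      phi_col_sum h01 hmul htr hzero (H j i') u']
    simp
  have h4 : Φ * Bm = Jm := by
    ext ⟨i, u⟩ ⟨i', u'⟩
    rw [Matrix.mul_apply]
    simp only [Fintype.sum_prod_type, hΦdef, hBdef, hJdef, Matrix.of_apply,
      mul_ite, mul_one, mul_zero]
    rw [Finset.sum_comm]
    simp [Finset.sum_ite_eq', phi_row_sum h01 hmul htr hzero]
  have h5 : Bm * Φ = Jm := by
    ext ⟨i, u⟩ ⟨i', u'⟩
    rw [Matrix.mul_apply]
    simp only [Fintype.sum_prod_type, hΦdef, hBdef, hJdef, Matrix.of_apply,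
      ite_mul, one_mul, zero_mul]
    simp [Finset.sum_ite_eq, phi_col_sum h01 hmul htr hzero]
  have h6a : Jm * Jm = ((g : ℝ) * ((g : ℝ) * lam)) • Jm := by
    ext p q
    rw [Matrix.mul_apply]
    simp [hJdef, Finset.card_univ, mul_comm]
  have h6b : Bm * Bm = (g : ℝ) • Bm := by
    ext ⟨i, u⟩ ⟨i', u'⟩
    rw [Matrix.mul_apply]
    simp only [Fintype.sum_prod_type, hBdef, Matrix.of_apply, ite_mul, one_mul,
      zero_mul, Matrix.smul_apply, smul_eq_mul]
    simp [Finset.sum_ite_eq, Finset.sum_ite_eq']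
    by_cases hi : i = i' <;> simp [hi]
  have h6c : Jm * Bm = (g : ℝ) • Jm := by
    ext ⟨i, u⟩ ⟨i', u'⟩
    rw [Matrix.mul_apply]
    simp only [Fintype.sum_prod_type, hBdef, hJdef, Matrix.of_apply, one_mul,
      Matrix.smul_apply, smul_eq_mul]
    have e : ∀ j : Fin (g * lam),
        ((if j = i' then (Finset.univ : Finset (Fin g)) else ∅).card : ℝ)
          = if j = i' then (g : ℝ) else 0 := by
      intro j; split <;> simp
    simp [e, Finset.sum_ite_eq']
  have h6d : Bm * Jm = (g : ℝ) • Jm := by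
    ext ⟨i, u⟩ ⟨i', u'⟩
    rw [Matrix.mul_apply]
    simp only [Fintype.sum_prod_type, hBdef, hJdef, Matrix.of_apply, mul_one,
      Matrix.smul_apply, smul_eq_mul]
    have e : ∀ j : Fin (g * lam),
        ((if i = j then (Finset.univ : Finset (Fin g)) else ∅).card : ℝ)
          = if i = j then (g : ℝ) else 0 := by
      intro j; split <;> simp
    simp [e, Finset.sum_ite_eq]
  set X : Matrix (Fin (g * lam) × Fin g) (Fin (g * lam) × Fin g) ℝ :=
    Φᵀ * Φ with hXdef
  have hPtJ : Φᵀ * Jm = ((g : ℝ) * lam) • Jm := by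
    rw [← hJt, ← transpose_mul, h3, transpose_smul, hJt]
  have hJPt : Jm * Φᵀ = ((g : ℝ) * lam) • Jm := by
    rw [← hJt, ← transpose_mul, h2, transpose_smul, hJt]
  have hPtB : Φᵀ * Bm = Jm := by
    rw [← hBt, ← transpose_mul, h5, hJt]
  have hBPt : Bm * Φᵀ = Jm := by
    rw [← hBt, ← transpose_mul, h4, hJt]
  have hXt : Xᵀ = X := by rw [hXdef, transpose_mul, transpose_transpose]
  have hXJ : X * Jm = (((g : ℝ) * lam) * ((g : ℝ) * lam)) • Jm := by
    rw [hXdef, Matrix.mul_assoc, h2, Matrix.mul_smul, hPtJ, smul_smul]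
  have hJX : Jm * X = (((g : ℝ) * lam) * ((g : ℝ) * lam)) • Jm := by
    rw [hXdef, ← Matrix.mul_assoc, hJPt, Matrix.smul_mul, h3, smul_smul]
  have hXB : X * Bm = ((g : ℝ) * lam) • Jm := by
    rw [hXdef, Matrix.mul_assoc, h4, hPtJ]
  have hBX : Bm * X = ((g : ℝ) * lam) • Jm := by
    rw [hXdef, ← Matrix.mul_assoc, hBPt, h3]
  have hX2 : X * X = ((g : ℝ) * lam) • X
      + (((g : ℝ) * lam) * ((g : ℝ) * lam) * lam - ((g : ℝ) * lam) * lam) • Jm := by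
    have e1 : X * X = Φᵀ * ((Φ * Φᵀ) * Φ) := by
      rw [hXdef, Matrix.mul_assoc, ← Matrix.mul_assoc Φ Φᵀ Φ]
    rw [e1, h1, hTdef]
    simp only [add_mul, sub_mul, mul_add, mul_sub, Matrix.smul_mul,
      Matrix.mul_smul, one_mul, h3, h5, hPtJ, smul_smul, ← hXdef]
    module
  have hXT : X * T = ((g : ℝ) * lam) • X
      + (((g : ℝ) * lam) * ((g : ℝ) * lam) * lam - ((g : ℝ) * lam) * lam) • Jm := by
    rw [hTdef]
    simp only [mul_add, mul_sub, Matrix.mul_smul, mul_one, hXJ, hXB, smul_smul]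
    module
  have hTX : T * X = ((g : ℝ) * lam) • X
      + (((g : ℝ) * lam) * ((g : ℝ) * lam) * lam - ((g : ℝ) * lam) * lam) • Jm := by
    rw [hTdef]
    simp only [add_mul, sub_mul, Matrix.smul_mul, one_mul, hJX, hBX, smul_smul]
    module
  have hT2 : T * T = ((g : ℝ) * lam) • T
      + (((g : ℝ) * lam) * ((g : ℝ) * lam) * lam - ((g : ℝ) * lam) * lam) • Jm := by
    nth_rewrite 1 [hTdef]
    nth_rewrite 1 [hTdef]
    simp only [add_mul, sub_mul, mul_add, mul_sub, Matrix.smul_mul,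
      Matrix.mul_smul, one_mul, mul_one, h6a, h6b, h6c, h6d, smul_smul, hTdef]
    module
  set E : Matrix (Fin (g * lam) × Fin g) (Fin (g * lam) × Fin g) ℝ :=
    X - T with hEdef
  have hEt : Eᵀ = E := by rw [hEdef, transpose_sub, hXt, hTt]
  have hE2 : E * E = (-((g : ℝ) * lam)) • E := by
    rw [hEdef]
    simp only [sub_mul, mul_sub, hX2, hXT, hTX, hT2]
    module
  have htrJ : Jm.trace = ((g : ℝ) * lam) * g := by
    simp [Matrix.trace, Matrix.diag, hJdef, Finset.card_univ]
  have htrB : Bm.trace = ((g : ℝ) * lam) * g := by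
    simp [Matrix.trace, Matrix.diag, hBdef, Finset.card_univ]
  have htrX : X.trace = ((g : ℝ) * lam) * ((g : ℝ) * lam) * g := by
    have e1 : ∀ (c : Fin (g * lam)) (u : Fin g) (j : Fin (g * lam)),
        ∑ t, φ (H j c) t u = 1 := fun c u j =>
      phi_col_sum h01 hmul htr hzero (H j c) u
    simp only [Matrix.trace, Matrix.diag, hXdef, Matrix.mul_apply,
      transpose_apply, Fintype.sum_prod_type, hΦdef, Matrix.of_apply,
      phi_sq h01]
    simp only [e1]
    simp [Finset.card_univ]
    ring
  have htrT : T.trace = ((g : ℝ) * lam) * ((g : ℝ) * lam) * g := by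
    rw [hTdef, Matrix.trace_sub, Matrix.trace_add, Matrix.trace_smul,
      Matrix.trace_smul, Matrix.trace_smul, Matrix.trace_one, htrJ, htrB]
    simp [Finset.card_univ]
    ring
  have htrE : E.trace = 0 := by
    rw [hEdef, Matrix.trace_sub, htrX, htrT, sub_self]
  have hsq0 : ∑ p : Fin (g * lam) × Fin g, ∑ q : Fin (g * lam) × Fin g,
      E p q ^ 2 = 0 := by
    have h0 : (E * E).trace = 0 := by rw [hE2, Matrix.trace_smul, htrE, smul_zero]
    rw [← h0]
    simp only [Matrix.trace, Matrix.diag, Matrix.mul_apply]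
    refine Finset.sum_congr rfl fun p _ => Finset.sum_congr rfl fun q _ => ?_
    have e2 : E q p = E p q := by
      have := congrFun (congrFun hEt p) q
      rw [← this]; rfl
    rw [e2, sq]
  have hE0 : ∀ p q, E p q = 0 := by
    intro p q
    have h1' := (Finset.sum_eq_zero_iff_of_nonneg
      (fun p _ => Finset.sum_nonneg fun q _ => sq_nonneg (E p q))).1 hsq0 p
      (Finset.mem_univ p)
    have h2' := (Finset.sum_eq_zero_iff_of_nonneg
      (fun q _ => sq_nonneg (E p q))).1 h1' q (Finset.mem_univ q)
    exact pow_eq_zero_iff (by norm_num) |>.1 h2'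
  have key := hE0 (a, s) (a', s')
  rw [hEdef, Matrix.sub_apply, sub_eq_zero] at key
  have hXe : X (a, s) (a', s') = ∑ j, φ (H j a' - H j a) s s' := by
    rw [hXdef, Matrix.mul_apply]
    simp only [Fintype.sum_prod_type, transpose_apply, hΦdef, Matrix.of_apply]
    exact Finset.sum_congr rfl fun j _ => phi_tr_mul hmul htr (H j a) (H j a') s s'
  rw [hXe] at key
  rw [key, hTdef]
  simp only [Matrix.sub_apply, Matrix.add_apply, Matrix.smul_apply,
    Matrix.one_apply, hJdef, hBdef, Matrix.of_apply, Prod.mk.injEq,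
    smul_eq_mul]
  by_cases ha : a = a' <;> by_cases hs : s = s' <;> simp [ha, hs]

lemma keySum (h01 : ∀ x i j, φ x i j = 0 ∨ φ x i j = 1)
    (hmul : ∀ x y, φ (x + y) = φ x * φ y) (htr : ∀ x, (φ x)ᵀ = φ (-x))
    (hzero : φ 0 = 1)
    (hsum : ∑ x : G, φ x = Matrix.of fun _ _ => (1 : ℝ))
    (H : Fin (g * lam) → Fin (g * lam) → G)
    (hGH : ∀ i k, i ≠ k → ∀ x : G,
      (Finset.univ.filter fun j => H i j - H k j = x).card = lam)
    (i i' a a' : Fin (g * lam)) (s s' : Fin g) :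
    ∑ j, ∑ b, φ ((H j a' - H j a) + (H i b - H i' b)) s s' =
      if i = i' ∧ a = a' then (if s = s' then (g : ℝ)^2 * lam^2 else 0)
      else (g : ℝ) * lam^2 := by
  classical
  have expand : ∀ j b : Fin (g * lam),
      φ ((H j a' - H j a) + (H i b - H i' b)) s s' =
        ∑ w, φ (H j a' - H j a) s w * φ (H i b - H i' b) w s' := fun j b =>
    phi_add hmul _ _ s s'
  simp only [expand]
  have swap : ∑ j, ∑ b, ∑ w, φ (H j a' - H j a) s w * φ (H i b - H i' b) w s'
      = ∑ w, (∑ j, φ (H j a' - H j a) s w) * (∑ b, φ (H i b - H i' b) w s') := by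
    calc ∑ j, ∑ b, ∑ w, φ (H j a' - H j a) s w * φ (H i b - H i' b) w s'
        = ∑ j, ∑ w, ∑ b, φ (H j a' - H j a) s w * φ (H i b - H i' b) w s' :=
          Finset.sum_congr rfl fun j _ => Finset.sum_comm
      _ = ∑ j, ∑ w, φ (H j a' - H j a) s w * ∑ b, φ (H i b - H i' b) w s' :=
          Finset.sum_congr rfl fun j _ => Finset.sum_congr rfl fun w _ =>
            (Finset.mul_sum _ _ _).symm
      _ = ∑ w, ∑ j, φ (H j a' - H j a) s w * ∑ b, φ (H i b - H i' b) w s' :=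
          Finset.sum_comm
      _ = ∑ w, (∑ j, φ (H j a' - H j a) s w) * ∑ b, φ (H i b - H i' b) w s' :=
          Finset.sum_congr rfl fun w _ => (Finset.sum_mul _ _ _).symm
  rw [swap]
  have hcol : ∀ w, ∑ j, φ (H j a' - H j a) s w =
      if a = a' then (if s = w then (g : ℝ) * lam else 0) else (lam : ℝ) :=
    fun w => colGH h01 hmul htr hzero hsum H hGH a a' s w
  have hrow : ∀ w, ∑ b, φ (H i b - H i' b) w s' =
      if i = i' then (if w = s' then (g : ℝ) * lam else 0) else (lam : ℝ) := by
    intro w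
    by_cases hi : i = i'
    · subst hi
      simp only [sub_self, hzero, Matrix.one_apply, if_pos rfl]
      rw [Finset.sum_const]
      by_cases hw : w = s' <;> simp [hw] <;> push_cast <;> ring
    · rw [rowGH H hGH hsum hi w s', if_neg hi]
  simp only [hcol, hrow]
  by_cases hi : i = i' <;> by_cases ha : a = a' <;>
    simp only [hi, ha, if_true, if_false, and_true, and_false, true_and,
      false_and, if_pos rfl]
  · -- both equal
    simp only [ite_mul, mul_ite, zero_mul, mul_zero, Finset.sum_ite_eq,
      Finset.mem_univ, if_true]
    by_cases hs : s = s' <;> simp [hs] <;> push_cast <;> ring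
  · -- i = i', a ≠ a'
    simp only [mul_ite, mul_zero, Finset.sum_ite_eq', Finset.mem_univ, if_true]
    push_cast; ring
  · -- i ≠ i', a = a'
    simp only [ite_mul, zero_mul, Finset.sum_ite_eq, Finset.mem_univ, if_true]
    push_cast; ring
  · simp only [Finset.sum_const, Finset.card_univ, Fintype.card_fin,
      nsmul_eq_mul]
    push_cast; ring


end Aux


/-- Let `H` be a `GH(g,λ)` over a finite abelian group of order `g` with
permutation representation `φ`, and let `M` be the block matrix of order `g³λ²`
whose `((i,(a,s)),(j,(b,t)))`-entry is `φ(−h_{ja} + h_{ib}) s t` (i.e. the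
`(i,j)`-block is `D_{ij} = φ(h_j)ᵀ φ(h_i)`). Then
`M Mᵀ = Mᵀ M = g²λ²·I + gλ²·(J − I_{g²λ²}⊗J_g)`, so `M` is the incidence matrix
of a symmetric group divisible design with parameters `(g³λ², g²λ², g²λ², g, 0, gλ²)`. -/
theorem stmt9 {G : Type*} [AddCommGroup G] [Fintype G] [DecidableEq G]
    (g lam : ℕ) (hg : Fintype.card G = g) (hlam : 0 < lam)
    (H : Fin (g * lam) → Fin (g * lam) → G)
    (hGH : ∀ i k, i ≠ k → ∀ x : G,
      (Finset.univ.filter fun j => H i j - H k j = x).card = lam)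
    (φ : G → Matrix (Fin g) (Fin g) ℝ)
    (h01 : ∀ x i j, φ x i j = 0 ∨ φ x i j = 1)
    (hmul : ∀ x y, φ (x + y) = φ x * φ y)
    (htr : ∀ x, (φ x)ᵀ = φ (-x))
    (hzero : φ 0 = 1)
    (hsum : ∑ x : G, φ x = Matrix.of fun _ _ => (1 : ℝ))
    (M : Matrix (Fin (g * lam) × Fin (g * lam) × Fin g)
      (Fin (g * lam) × Fin (g * lam) × Fin g) ℝ)
    (hM : ∀ P Q, M P Q = φ (-(H Q.1 P.2.1) + H P.1 Q.2.1) P.2.2 Q.2.2) :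
    M * Mᵀ =
      ((g : ℝ)^2 * (lam : ℝ)^2) •
        (1 : Matrix (Fin (g * lam) × Fin (g * lam) × Fin g)
          (Fin (g * lam) × Fin (g * lam) × Fin g) ℝ)
      + ((g : ℝ) * (lam : ℝ)^2) •
        (Matrix.of (fun _ _ : Fin (g * lam) × Fin (g * lam) × Fin g => (1 : ℝ))
          - Matrix.of fun P Q : Fin (g * lam) × Fin (g * lam) × Fin g =>
              if P.1 = Q.1 ∧ P.2.1 = Q.2.1 then (1 : ℝ) else 0) ∧
    Mᵀ * M =
      ((g : ℝ)^2 * (lam : ℝ)^2) •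
        (1 : Matrix (Fin (g * lam) × Fin (g * lam) × Fin g)
          (Fin (g * lam) × Fin (g * lam) × Fin g) ℝ)
      + ((g : ℝ) * (lam : ℝ)^2) •
        (Matrix.of (fun _ _ : Fin (g * lam) × Fin (g * lam) × Fin g => (1 : ℝ))
          - Matrix.of fun P Q : Fin (g * lam) × Fin (g * lam) × Fin g =>
              if P.1 = Q.1 ∧ P.2.1 = Q.2.1 then (1 : ℝ) else 0) := by
  classical
  constructor
  · ext ⟨i, a, s⟩ ⟨i', a', s'⟩
    rw [Matrix.mul_apply]
    simp only [Fintype.sum_prod_type, transpose_apply, hM]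
    have step : ∀ j b : Fin (g * lam),
        ∑ t, φ (-(H j a) + H i b) s t * φ (-(H j a') + H i' b) s' t =
          φ ((H j a' - H j a) + (H i b - H i' b)) s s' := by
      intro j b
      rw [phi_mul_tr hmul htr]
      congr 1
      abel
    rw [Finset.sum_congr rfl fun j _ => Finset.sum_congr rfl fun b _ => step j b,
      keySum h01 hmul htr hzero hsum H hGH i i' a a' s s']
    simp only [Matrix.add_apply, Matrix.smul_apply, Matrix.sub_apply,
      Matrix.of_apply, Matrix.one_apply, smul_eq_mul, Prod.mk.injEq]
    by_cases hi : i = i' <;> by_cases ha : a = a' <;> by_cases hs : s = s' <;>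
      simp [hi, ha, hs] <;> push_cast <;> ring
  · ext ⟨i, a, s⟩ ⟨i', a', s'⟩
    rw [Matrix.mul_apply]
    simp only [Fintype.sum_prod_type, transpose_apply, hM]
    have step : ∀ j b : Fin (g * lam),
        ∑ t, φ (-(H i b) + H j a) t s * φ (-(H i' b) + H j a') t s' =
          φ ((H j a' - H j a) + (H i b - H i' b)) s s' := by
      intro j b
      rw [phi_tr_mul hmul htr]
      congr 1
      abel
    rw [Finset.sum_congr rfl fun j _ => Finset.sum_congr rfl fun b _ => step j b,
      keySum h01 hmul htr hzero hsum H hGH i i' a a' s s']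
    simp only [Matrix.add_apply, Matrix.smul_apply, Matrix.sub_apply,
      Matrix.of_apply, Matrix.one_apply, smul_eq_mul, Prod.mk.injEq]
    by_cases hi : i = i' <;> by_cases ha : a = a' <;> by_cases hs : s = s' <;>
      simp [hi, ha, hs] <;> push_cast <;> ring


end
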